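/- Let ρ be a density matrix on ℂ² ⊗ ℂ^d, i.e., a positive semidefinite complex matrix indexed by Fin 2 × Fin d with trace 1, let U be a unitary d×d complex matrix, and let O₁₀ = |1⟩⟨0| ⊗ U be the Kronecker product of the 2×2 matrix whose only nonzero entry is a 1 in row 1, column 0 with U. Then |Tr(ρ · O₁₀)|² ≤ Tr(ρ · (|0⟩⟨0| ⊗ I)) · Tr(ρ · (|1⟩⟨1| ⊗ I)), and consequently |Tr(ρ · O₁₀)| ≤ 1/2. -/

import Mathlib

open Matrix Kronecker ComplexOrder

private def toE {n : Type*} [Fintype n] (A : Matrix n n ℂ) : EuclideanSpace ℂ (n × n) :=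
  WithLp.toLp 2 (fun p : n × n => A p.1 p.2)

private lemma trace_inner {n : Type*} [Fintype n] (C D : Matrix n n ℂ) :
    (Cᴴ * D).trace = inner (𝕜 := ℂ) (toE C) (toE D) := by
  simp only [trace, diag, mul_apply, conjTranspose_apply, PiLp.inner_apply,
    RCLike.inner_apply, starRingEnd_apply, toE, PiLp.toLp_apply]
  rw [← Finset.sum_product', Finset.univ_product_univ]
  exact Fintype.sum_equiv (Equiv.prodComm n n) _ _ fun p => mul_comm _ _

private lemma trace_sq {n : Type*} [Fintype n] (A : Matrix n n ℂ) :
    ((Aᴴ * A).trace).re = ‖toE A‖ ^ 2 := by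
  rw [trace_inner A A, ← @inner_self_eq_norm_sq ℂ]; rfl

private lemma trace_CS {n : Type*} [Fintype n] (A B : Matrix n n ℂ) :
    ‖(Aᴴ * B).trace‖ ^ 2 ≤ ((Aᴴ * A).trace).re * ((Bᴴ * B).trace).re := by
  rw [trace_inner A B, trace_sq, trace_sq]
  calc ‖inner (𝕜 := ℂ) (toE A) (toE B)‖ ^ 2
      = ‖inner (𝕜 := ℂ) (toE A) (toE B)‖ ^ 2 := rfl
    _ ≤ (‖toE A‖ * ‖toE B‖) ^ 2 := by
        apply pow_le_pow_left₀ (norm_nonneg _) (norm_inner_le_norm _ _)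
    _ = ‖toE A‖ ^ 2 * ‖toE B‖ ^ 2 := by ring

private lemma trace_nonneg {n : Type*} [Fintype n] (A : Matrix n n ℂ) :
    0 ≤ ((Aᴴ * A).trace).re := by
  rw [trace_sq]; positivity

private lemma kron_conjT {l m n p : Type*} (A : Matrix l m ℂ) (B : Matrix n p ℂ) :
    (A ⊗ₖ B)ᴴ = Aᴴ ⊗ₖ Bᴴ := by
  ext ⟨i, j⟩ ⟨k, l⟩
  simp [conjTranspose_apply, mul_comm]

private lemma std_conjT (i j : Fin 2) :
    (Matrix.single i j (1 : ℂ))ᴴ = Matrix.single j i 1 := by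
  ext a b
  simp [single, conjTranspose_apply, and_comm]

open scoped MatrixOrder in
private lemma psd_sqrt {n : Type*} [Fintype n] [DecidableEq n] (ρ : Matrix n n ℂ)
    (hρ : ρ.PosSemidef) : ∃ S : Matrix n n ℂ, S * S = ρ ∧ Sᴴ = S :=
  ⟨CFC.sqrt ρ, CFC.sqrt_mul_sqrt_self ρ hρ.nonneg, (CFC.sqrt_nonneg ρ).isSelfAdjoint.star_eq⟩

theorem stmt_0 {d : ℕ}
    (ρ : Matrix (Fin 2 × Fin d) (Fin 2 × Fin d) ℂ)
    (hρ : ρ.PosSemidef) (hρtr : ρ.trace = 1)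
    (U : Matrix (Fin d) (Fin d) ℂ)
    (hU : Uᴴ * U = 1 ∧ U * Uᴴ = 1) :
    ‖(ρ * (Matrix.single (1 : Fin 2) (0 : Fin 2) (1 : ℂ) ⊗ₖ U)).trace‖ ^ 2
      ≤ ((ρ * (Matrix.single (0 : Fin 2) (0 : Fin 2) (1 : ℂ) ⊗ₖ (1 : Matrix (Fin d) (Fin d) ℂ))).trace).re
        * ((ρ * (Matrix.single (1 : Fin 2) (1 : Fin 2) (1 : ℂ) ⊗ₖ (1 : Matrix (Fin d) (Fin d) ℂ))).trace).re
    ∧ ‖(ρ * (Matrix.single (1 : Fin 2) (0 : Fin 2) (1 : ℂ) ⊗ₖ U)).trace‖ ≤ 1 / 2 := by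
  obtain ⟨S, hSS, hSH⟩ := psd_sqrt ρ hρ
  set P0 : Matrix (Fin 2 × Fin d) (Fin 2 × Fin d) ℂ :=
    Matrix.single (0 : Fin 2) (0 : Fin 2) (1 : ℂ) ⊗ₖ 1 with hP0
  set P1 : Matrix (Fin 2 × Fin d) (Fin 2 × Fin d) ℂ :=
    Matrix.single (1 : Fin 2) (1 : Fin 2) (1 : ℂ) ⊗ₖ 1 with hP1
  set O : Matrix (Fin 2 × Fin d) (Fin 2 × Fin d) ℂ :=
    Matrix.single (1 : Fin 2) (0 : Fin 2) (1 : ℂ) ⊗ₖ U with hO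
  have hP0H : P0ᴴ = P0 := by rw [hP0, kron_conjT, std_conjT, conjTranspose_one]
  have hP1H : P1ᴴ = P1 := by rw [hP1, kron_conjT, std_conjT, conjTranspose_one]
  have hOH : Oᴴ = Matrix.single (0 : Fin 2) (1 : Fin 2) (1 : ℂ) ⊗ₖ Uᴴ := by
    rw [hO, kron_conjT, std_conjT]
  -- key matrix algebra facts
  have hP0sq : P0 * P0 = P0 := by
    rw [hP0, ← mul_kronecker_mul, single_mul_single_same, mul_one, one_mul]
  have hP1sq : P1 * P1 = P1 := by
    rw [hP1, ← mul_kronecker_mul, single_mul_single_same, mul_one, one_mul]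
  have hP10 : P1 * O * P0 = O := by
    rw [hP1, hP0, hO, ← mul_kronecker_mul, ← mul_kronecker_mul, single_mul_single_same,
      single_mul_single_same, mul_one, one_mul, Matrix.mul_one, Matrix.one_mul]
  have hOOH : O * Oᴴ = P1 := by
    rw [hO, hOH, ← mul_kronecker_mul, single_mul_single_same, mul_one, hU.2, hP1]
  have hsum : P0 + P1 = 1 := by
    rw [hP0, hP1, ← add_kronecker, ← one_kronecker_one (α := ℂ)]
    ext a b
    obtain ⟨a1, a2⟩ := a
    obtain ⟨b1, b2⟩ := b
    fin_cases a1 <;> fin_cases b1 <;>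
      simp [single, one_apply]
  set A := S * P0 with hA
  set B := S * (P1 * O) with hB
  -- traces
  have mA : Aᴴ * A = P0 * ρ * P0 := by
    rw [hA, conjTranspose_mul, hSH, hP0H, ← hSS]
    simp only [Matrix.mul_assoc]
  have mB : Bᴴ * B = Oᴴ * P1 * ρ * (P1 * O) := by
    rw [hB, conjTranspose_mul, conjTranspose_mul, hSH, hP1H, ← hSS]
    simp only [Matrix.mul_assoc]
  have mAB : Aᴴ * B = P0 * ρ * (P1 * O) := by
    rw [hA, hB, conjTranspose_mul, hSH, hP0H, ← hSS]
    simp only [Matrix.mul_assoc]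
  have tA : (Aᴴ * A).trace = (ρ * P0).trace := by
    rw [mA, trace_mul_cycle, hP0sq, trace_mul_comm]
  have e1 : P1 * O * (Oᴴ * P1) = P1 := by
    rw [← Matrix.mul_assoc, Matrix.mul_assoc P1 O Oᴴ, hOOH, hP1sq, hP1sq]
  have tB : (Bᴴ * B).trace = (ρ * P1).trace := by
    rw [mB, trace_mul_cycle, e1, trace_mul_comm]
  have tAB : (Aᴴ * B).trace = (ρ * O).trace := by
    rw [mAB, trace_mul_cycle, hP10, trace_mul_comm]
  have hCS := trace_CS A B
  have ha : 0 ≤ ((ρ * P0).trace).re := by rw [← tA]; exact trace_nonneg A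
  have hb : 0 ≤ ((ρ * P1).trace).re := by rw [← tB]; exact trace_nonneg B
  rw [tA, tB, tAB] at hCS
  refine ⟨hCS, ?_⟩
  have habs : 0 ≤ ‖(ρ * O).trace‖ := norm_nonneg _
  have hsum1 : ((ρ * P0).trace).re + ((ρ * P1).trace).re = 1 := by
    have h : (ρ * P0).trace + (ρ * P1).trace = 1 := by
      rw [← trace_add, ← Matrix.mul_add, hsum, Matrix.mul_one, hρtr]
    have := congrArg Complex.re h
    simpa using this
  nlinarith [hCS, sq_nonneg (((ρ * P0).trace).re - ((ρ * P1).trace).re)]
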